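/- Let n ≥ 2. Every reflection system L for the dicyclic group 𝒟_n is equivalent to L⁽ⁿ⁾₍ₐ,ᵦ₎ for some (a, b) ∈ Ω_n, where two reflection systems L, L' for 𝒟_n are called equivalent if there exist a group automorphism φ of 𝒟_n and an element x ∈ L such that L' = φ(xL) or L' = φ(Lx). -/

import Mathlib

noncomputable section

open Matrix

local notation "ℍ" => Quaternion ℝ

/-- The binary operation `a ∘ b = a * b⁻¹ * a`. -/
def circ {K : Type*} [Group K] (a b : K) : K := a * b⁻¹ * a

/-- A set is closed under `circ`. -/
def CircClosed {K : Type*} [Group K] (S : Set K) : Prop :=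
  ∀ a ∈ S, ∀ b ∈ S, circ a b ∈ S

/-- The closure of a set under `circ`: the smallest superset closed under `circ`. -/
def circClosure {K : Type*} [Group K] (X : Set K) : Set K :=
  ⋂₀ {S : Set K | X ⊆ S ∧ CircClosed S}

/-- `L` is a reflection system for the subgroup `K`. -/
def IsReflectionSystem {G : Type*} [Group G] (K : Subgroup G) (L : Set G) : Prop :=
  Subgroup.closure L = K ∧ CircClosed L ∧ (1 : G) ∈ L

/-- `H` is a normal subgroup of `K` (both given as subgroups of an ambient group). -/
def NormalIn {G : Type*} [Group G] (H K : Subgroup G) : Prop :=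
  H ≤ K ∧ ∀ k ∈ K, ∀ h ∈ H, k * h * k⁻¹ ∈ H

/-- The set `L·H`. -/
def mulSet {G : Type*} [Group G] (L : Set G) (H : Subgroup G) : Set G :=
  {x | ∃ l ∈ L, ∃ h ∈ H, x = l * h}

/-- The orbit of `b` in `L`: smallest subset of `L` containing `b` and closed under
`x ↦ a ∘ x` for all `a ∈ L`. -/
def orb {K : Type*} [Group K] (L : Set K) (b : K) : Set K :=
  ⋂₀ {S : Set K | b ∈ S ∧ S ⊆ L ∧ ∀ a ∈ L, ∀ x ∈ S, circ a x ∈ S}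

lemma mk_ne_zero_re {a b c d : ℝ} (h : a ≠ 0) : (⟨a,b,c,d⟩ : ℍ) ≠ 0 :=
  fun h0 => h (congrArg QuaternionAlgebra.re h0)

lemma mk_ne_zero_imI {a b c d : ℝ} (h : b ≠ 0) : (⟨a,b,c,d⟩ : ℍ) ≠ 0 :=
  fun h0 => h (congrArg QuaternionAlgebra.imI h0)

lemma mk_ne_zero_imJ {a b c d : ℝ} (h : c ≠ 0) : (⟨a,b,c,d⟩ : ℍ) ≠ 0 :=
  fun h0 => h (congrArg QuaternionAlgebra.imJ h0)

lemma mk_ne_zero_imK {a b c d : ℝ} (h : d ≠ 0) : (⟨a,b,c,d⟩ : ℍ) ≠ 0 :=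
  fun h0 => h (congrArg QuaternionAlgebra.imK h0)

/-- The quaternion `i` as a unit. -/
def iU : ℍˣ := Units.mk0 (⟨0,1,0,0⟩ : ℍ) (mk_ne_zero_imI one_ne_zero)

/-- The quaternion `j` as a unit. -/
def jU : ℍˣ := Units.mk0 (⟨0,0,1,0⟩ : ℍ) (mk_ne_zero_imJ one_ne_zero)

/-- The quaternion `k` as a unit. -/
def kU : ℍˣ := Units.mk0 (⟨0,0,0,1⟩ : ℍ) (mk_ne_zero_imK one_ne_zero)

/-- The quaternion `ζ = (1+i+j+k)/2` as a unit. -/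
def zetaU : ℍˣ := Units.mk0 (⟨1/2,1/2,1/2,1/2⟩ : ℍ) (mk_ne_zero_re (by norm_num))

/-- The quaternion `(1+i)/√2` as a unit. -/
def e1iU : ℍˣ :=
  Units.mk0 (⟨1/Real.sqrt 2, 1/Real.sqrt 2, 0, 0⟩ : ℍ)
    (mk_ne_zero_re (by positivity))

/-- The quaternion `(j-k)/√2` as a unit. -/
def jmkU : ℍˣ :=
  Units.mk0 (⟨0, 0, 1/Real.sqrt 2, -(1/Real.sqrt 2)⟩ : ℍ)
    (mk_ne_zero_imJ (by positivity))

/-- The quaternion `(1 + τ i + σ j)/2`, `τ = (1+√5)/2`, `σ = (1-√5)/2`, as a unit. -/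
def iotaU : ℍˣ :=
  Units.mk0 (⟨1/2, ((1+Real.sqrt 5)/2)/2, ((1-Real.sqrt 5)/2)/2, 0⟩ : ℍ)
    (mk_ne_zero_re (by norm_num))

lemma omega_ne_zero (n : ℕ) :
    (⟨Real.cos (Real.pi / n), Real.sin (Real.pi / n), 0, 0⟩ : ℍ) ≠ 0 := by
  intro h
  have h1 : Real.cos (Real.pi / n) = 0 := congrArg QuaternionAlgebra.re h
  have h2 : Real.sin (Real.pi / n) = 0 := congrArg QuaternionAlgebra.imI h
  have := Real.sin_sq_add_cos_sq (Real.pi / n)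
  rw [h1, h2] at this
  norm_num at this

/-- The primitive `2n`-th root of unity `ω = cos(π/n) + sin(π/n) i` as a unit quaternion. -/
def omegaU (n : ℕ) : ℍˣ :=
  Units.mk0 (⟨Real.cos (Real.pi / n), Real.sin (Real.pi / n), 0, 0⟩ : ℍ) (omega_ne_zero n)

/-- The dicyclic group `𝒟ₙ = ⟨ω, j⟩` of order `4n`. -/
def dicyclic (n : ℕ) : Subgroup ℍˣ := Subgroup.closure {omegaU n, jU}

/-- The binary tetrahedral group `𝒯`. -/
def binTet : Subgroup ℍˣ := Subgroup.closure {iU, zetaU}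

/-- The binary octahedral group `𝒪`. -/
def binOct : Subgroup ℍˣ := Subgroup.closure {e1iU, zetaU}

/-- The binary icosahedral group `ℐ`. -/
def binIco : Subgroup ℍˣ := Subgroup.closure {iU, zetaU, iotaU}

/-- `GL₂(ℍ)` as the unit group of the matrix ring. -/
abbrev GL2H := (Matrix (Fin 2) (Fin 2) ℍ)ˣ

def M2 (b : ℍˣ) : Matrix (Fin 2) (Fin 2) ℍ := !![0, (b : ℍ); ((b⁻¹ : ℍˣ) : ℍ), 0]

lemma M2_mul_self (b : ℍˣ) : M2 b * M2 b = 1 := by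
  refine Matrix.ext fun i j => ?_
  fin_cases i <;> fin_cases j <;>
    simp [M2, Matrix.mul_apply, Fin.sum_univ_two, Matrix.one_apply]

/-- The matrix `M_b = [[0, b], [b⁻¹, 0]]` as an element of `GL₂(ℍ)`. -/
def Mb (b : ℍˣ) : GL2H := ⟨M2 b, M2 b, M2_mul_self b, M2_mul_self b⟩

def D1M (h : ℍˣ) : Matrix (Fin 2) (Fin 2) ℍ := !![(h : ℍ), 0; 0, 1]

lemma D1M_mul_inv (h : ℍˣ) : D1M h * D1M h⁻¹ = 1 := by
  refine Matrix.ext fun i j => ?_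
  fin_cases i <;> fin_cases j <;>
    simp [D1M, Matrix.mul_apply, Fin.sum_univ_two, Matrix.one_apply]

lemma D1M_inv_mul (h : ℍˣ) : D1M h⁻¹ * D1M h = 1 := by
  refine Matrix.ext fun i j => ?_
  fin_cases i <;> fin_cases j <;>
    simp [D1M, Matrix.mul_apply, Fin.sum_univ_two, Matrix.one_apply]

/-- The matrix `D₁(h) = diag(h, 1)` as an element of `GL₂(ℍ)`. -/
def D1 (h : ℍˣ) : GL2H := ⟨D1M h, D1M h⁻¹, D1M_mul_inv h, D1M_inv_mul h⟩

def D2M (h : ℍˣ) : Matrix (Fin 2) (Fin 2) ℍ := !![1, 0; 0, (h : ℍ)]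

lemma D2M_mul_inv (h : ℍˣ) : D2M h * D2M h⁻¹ = 1 := by
  refine Matrix.ext fun i j => ?_
  fin_cases i <;> fin_cases j <;>
    simp [D2M, Matrix.mul_apply, Fin.sum_univ_two, Matrix.one_apply]

lemma D2M_inv_mul (h : ℍˣ) : D2M h⁻¹ * D2M h = 1 := by
  refine Matrix.ext fun i j => ?_
  fin_cases i <;> fin_cases j <;>
    simp [D2M, Matrix.mul_apply, Fin.sum_univ_two, Matrix.one_apply]

/-- The matrix `D₂(h) = diag(1, h)` as an element of `GL₂(ℍ)`. -/
def D2 (h : ℍˣ) : GL2H := ⟨D2M h, D2M h⁻¹, D2M_mul_inv h, D2M_inv_mul h⟩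

/-- The group `G(K, L, H)`, generated by `D₁(H)`, `D₂(H)` and `M_L`. -/
def GKLH (H : Subgroup ℍˣ) (L : Set ℍˣ) : Subgroup GL2H :=
  Subgroup.closure (D1 '' (H : Set ℍˣ) ∪ D2 '' (H : Set ℍˣ) ∪ Mb '' L)

/-- `G(K,L,H)` is in canonical form: every `b ∈ K` with `M_b ∈ G(K,L,H)` lies in `L`. -/
def CanonicalForm (K : Subgroup ℍˣ) (H : Subgroup ℍˣ) (L : Set ℍˣ) : Prop :=
  ∀ b : ℍˣ, b ∈ K → Mb b ∈ GKLH H L → b ∈ L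

/-- A reflection: a non-identity element fixing a nonzero vector. -/
def IsReflection (g : GL2H) : Prop :=
  g ≠ 1 ∧ ∃ v : Fin 2 → ℍ, v ≠ 0 ∧ Matrix.mulVec (Units.val g) v = v

/-- The number of reflections in a subgroup of `GL₂(ℍ)`. -/
def reflCount (G : Subgroup GL2H) : ℕ :=
  Nat.card {g : GL2H // g ∈ G ∧ IsReflection g}

/-- The index set `Ω_n`. -/
def OmegaMem (n a b : ℕ) : Prop :=
  1 ≤ a ∧ a ≤ b ∧ b ≤ n ∧ a ∣ n ∧ b ∣ n ∧ Nat.gcd a b = 1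

/-- The reflection system `L⁽ⁿ⁾₍ₐ,ᵦ₎`. -/
def Lab (n a b : ℕ) : Set ℍˣ :=
  {x | ∃ m, 1 ≤ m ∧ m ≤ 2 * n / a ∧ x = omegaU n ^ (m * a)} ∪
  {x | ∃ l, 1 ≤ l ∧ l ≤ 2 * n / b ∧ x = omegaU n ^ (l * b) * jU}

/-- The reflection group `G(n, a, b, r)`. -/
def Gnabr (n a b r : ℕ) : Subgroup GL2H :=
  Subgroup.closure
    ({Mb 1, Mb (omegaU n ^ a), Mb jU, Mb (omegaU n ^ b * jU), D1 (omegaU n ^ (2 * n / r))})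


/-- The image of a subset of the ambient group contained in `K` under an automorphism of `K`. -/
def sgImage {G : Type*} [Group G] {K : Subgroup G} (φ : K ≃* K) (S : Set G) : Set G :=
  {y | ∃ g : K, (g : G) ∈ S ∧ y = ((φ g : K) : G)}

namespace Stmt8

open Real AddSubgroup

lemma qmk_mul_mk (a₁ a₂ a₃ a₄ b₁ b₂ b₃ b₄ : ℝ) :
    (⟨a₁, a₂, a₃, a₄⟩ * ⟨b₁, b₂, b₃, b₄⟩ : ℍ) =
      ⟨a₁ * b₁ + (-1) * a₂ * b₂ + (-1) * a₃ * b₃ + 0 * (-1) * a₃ * b₄ - (-1) * (-1) * a₄ * b₄,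
        a₁ * b₂ + a₂ * b₁ + 0 * a₂ * b₂ - (-1) * a₃ * b₄ + (-1) * a₄ * b₃,
        a₁ * b₃ + (-1) * a₂ * b₄ + a₃ * b₁ + 0 * a₃ * b₂ - (-1) * a₄ * b₂,
        a₁ * b₄ + a₂ * b₃ + 0 * a₂ * b₄ - a₃ * b₂ + a₄ * b₁⟩ := rfl

/-- The unit quaternion `cos θ + sin θ · i`. -/
noncomputable def rot (θ : ℝ) : ℍˣ :=
  Units.mk0 (⟨Real.cos θ, Real.sin θ, 0, 0⟩ : ℍ) (by
    intro h
    have h1 : Real.cos θ = 0 := congrArg QuaternionAlgebra.re h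
    have h2 : Real.sin θ = 0 := congrArg QuaternionAlgebra.imI h
    nlinarith [Real.sin_sq_add_cos_sq θ])

lemma rot_val (θ : ℝ) : ((rot θ : ℍˣ) : ℍ) = ⟨Real.cos θ, Real.sin θ, 0, 0⟩ := rfl

lemma rot_mul (θ ψ : ℝ) : rot θ * rot ψ = rot (θ + ψ) := by
  apply Units.ext
  show (⟨Real.cos θ, Real.sin θ, 0, 0⟩ * ⟨Real.cos ψ, Real.sin ψ, 0, 0⟩ : ℍ) = _
  rw [qmk_mul_mk, rot_val, Real.cos_add, Real.sin_add]
  congr 1 <;> ring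

lemma rot_zero : rot 0 = 1 := by
  apply Units.ext
  show (⟨Real.cos 0, Real.sin 0, 0, 0⟩ : ℍ) = 1
  rw [Real.cos_zero, Real.sin_zero]
  rfl

lemma rot_inv (θ : ℝ) : (rot θ)⁻¹ = rot (-θ) :=
  inv_eq_of_mul_eq_one_right (by rw [rot_mul, add_neg_cancel, rot_zero])

lemma rot_pow (θ : ℝ) (m : ℕ) : rot θ ^ m = rot (m * θ) := by
  induction m with
  | zero => simpa using rot_zero.symm
  | succ k ih => rw [pow_succ, ih, rot_mul]; congr 1; push_cast; ring

lemma omegaU_eq_rot (n : ℕ) : omegaU n = rot (Real.pi / n) := Units.ext rfl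

lemma jU_mul_rot (θ : ℝ) : jU * rot θ = rot (-θ) * jU := by
  apply Units.ext
  show (⟨0,0,1,0⟩ * ⟨Real.cos θ, Real.sin θ, 0, 0⟩ : ℍ) =
    (⟨Real.cos (-θ), Real.sin (-θ), 0, 0⟩ * ⟨0,0,1,0⟩ : ℍ)
  rw [qmk_mul_mk, qmk_mul_mk, Real.cos_neg, Real.sin_neg]
  congr 1 <;> ring

lemma rot_mul_jU_val (θ : ℝ) :
    ((rot θ * jU : ℍˣ) : ℍ) = ⟨0, 0, Real.cos θ, Real.sin θ⟩ := by
  show (⟨Real.cos θ, Real.sin θ, 0, 0⟩ * ⟨0,0,1,0⟩ : ℍ) = _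
  rw [qmk_mul_mk]
  congr 1 <;> ring

lemma jU_sq : jU * jU = rot Real.pi := by
  apply Units.ext
  show (⟨0,0,1,0⟩ * ⟨0,0,1,0⟩ : ℍ) = (⟨Real.cos Real.pi, Real.sin Real.pi, 0, 0⟩ : ℍ)
  rw [qmk_mul_mk, Real.cos_pi, Real.sin_pi]
  congr 1 <;> ring

end Stmt8
namespace Stmt8

section PW
variable {n : ℕ}

lemma omega_pow (m : ℕ) : omegaU n ^ m = rot (m * (Real.pi / n)) := by
  rw [omegaU_eq_rot, rot_pow]

lemma omega_two_n (hn : 0 < n) : omegaU n ^ (2 * n) = 1 := by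
  rw [omega_pow]
  have : ((2 * n : ℕ) : ℝ) * (Real.pi / n) = 0 + 2 * Real.pi := by
    have : (n : ℝ) ≠ 0 := Nat.cast_ne_zero.mpr hn.ne'
    field_simp
    push_cast; ring
  rw [this, ← rot_mul]
  have h2 : rot (2 * Real.pi) = 1 := by
    apply Units.ext
    show (⟨Real.cos (2*Real.pi), Real.sin (2*Real.pi), 0, 0⟩ : ℍ) = 1
    rw [Real.cos_two_pi, Real.sin_two_pi]; rfl
  rw [rot_zero, h2, one_mul]

lemma omega_pow_eq_one_iff (hn : 0 < n) (m : ℕ) :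
    omegaU n ^ m = 1 ↔ 2 * n ∣ m := by
  constructor
  · intro h
    have hre : Real.cos (m * (Real.pi / n)) = 1 := by
      have := congrArg (fun u : ℍˣ => (u : ℍ).re) h
      rw [omega_pow] at this
      exact this
    obtain ⟨k, hk⟩ := (Real.cos_eq_one_iff _).mp hre
    have hn' : (n : ℝ) ≠ 0 := Nat.cast_ne_zero.mpr hn.ne'
    have hpi := Real.pi_ne_zero
    have hm : (m : ℝ) = 2 * n * k := by
      have : (k : ℝ) * (2 * Real.pi) * n = m * Real.pi := by
        field_simp at hk ⊢
        linarith [hk]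
      have h2 : ((m : ℝ)) * Real.pi = (2 * n * k) * Real.pi := by push_cast; linarith
      exact mul_right_cancel₀ hpi (by linarith)
    have : (m : ℤ) = 2 * n * k := by
      exact_mod_cast (by push_cast at hm ⊢; exact_mod_cast hm : ((m : ℤ) : ℝ) = ((2 * n * k : ℤ) : ℝ))
    exact Int.natCast_dvd_natCast.mp ⟨k, by exact_mod_cast this⟩
  · rintro ⟨k, rfl⟩
    rw [pow_mul, omega_two_n hn, one_pow]

lemma omega_orderOf (hn : 0 < n) : orderOf (omegaU n) = 2 * n := by
  rw [orderOf_eq_iff (by omega)]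
  refine ⟨omega_two_n hn, fun m hm hm0 h => ?_⟩
  have := (omega_pow_eq_one_iff hn m).mp h
  have := Nat.le_of_dvd hm0 this
  omega

/-- `pw x = ω^(x.val)` for `x : ZMod (2n)`. -/
noncomputable def pw (n : ℕ) (x : ZMod (2 * n)) : ℍˣ := omegaU n ^ x.val

lemma pw_congr_nat (hn : 0 < n) {a b : ℕ} (h : a ≡ b [MOD 2 * n]) :
    omegaU n ^ a = omegaU n ^ b := by
  rw [pow_eq_pow_iff_modEq, omega_orderOf hn]
  exact h

lemma pw_natCast (hn : 0 < n) (m : ℕ) : pw n (m : ZMod (2 * n)) = omegaU n ^ m := by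
  haveI : NeZero (2 * n) := ⟨by omega⟩
  unfold pw
  apply pw_congr_nat hn
  have : ((m : ZMod (2*n))).val = m % (2 * n) := ZMod.val_natCast _ m
  rw [this]
  exact (Nat.mod_modEq m (2*n)).symm ▸ (Nat.mod_modEq m (2*n))

lemma pw_zero (hn : 0 < n) : pw n 0 = 1 := by
  haveI : NeZero (2 * n) := ⟨by omega⟩
  unfold pw
  rw [ZMod.val_zero, pow_zero]

lemma pw_add (hn : 0 < n) (x y : ZMod (2 * n)) : pw n (x + y) = pw n x * pw n y := by
  haveI : NeZero (2 * n) := ⟨by omega⟩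
  unfold pw
  rw [← pow_add]
  apply pw_congr_nat hn
  rw [ZMod.val_add]
  exact Nat.mod_modEq _ _

lemma pw_neg (hn : 0 < n) (x : ZMod (2 * n)) : pw n (-x) = (pw n x)⁻¹ := by
  symm
  apply inv_eq_of_mul_eq_one_right (a := pw n x)
  rw [← pw_add hn, add_neg_cancel, pw_zero hn]

lemma pw_inj (hn : 0 < n) {x y : ZMod (2 * n)} (h : pw n x = pw n y) : x = y := by
  haveI : NeZero (2 * n) := ⟨by omega⟩
  unfold pw at h
  rw [pow_eq_pow_iff_modEq, omega_orderOf hn] at h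
  have hx := ZMod.val_lt x
  have hy := ZMod.val_lt y
  have : x.val = y.val := by
    have h2 : x.val % (2*n) = y.val % (2*n) := h
    rwa [Nat.mod_eq_of_lt hx, Nat.mod_eq_of_lt hy] at h2
  exact ZMod.val_injective _ this

end PW
end Stmt8
namespace Stmt8

section GRP
variable {n : ℕ}

lemma pw_n (hn : 0 < n) : pw n ((n : ℕ) : ZMod (2 * n)) = rot Real.pi := by
  rw [pw_natCast hn, omega_pow]
  congr 1
  have : (n : ℝ) ≠ 0 := Nat.cast_ne_zero.mpr hn.ne'
  field_simp

lemma jU_sq' (hn : 0 < n) : jU * jU = pw n ((n : ℕ) : ZMod (2 * n)) := by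
  rw [jU_sq, pw_n hn]

lemma pw_rot (x : ZMod (2 * n)) : pw n x = rot (x.val * (Real.pi / n)) := omega_pow _

lemma jU_mul_pw (hn : 0 < n) (x : ZMod (2 * n)) : jU * pw n x = pw n (-x) * jU := by
  rw [pw_rot x, jU_mul_rot, pw_neg hn, pw_rot x, rot_inv]

-- basic multiplication table
lemma mul_pw_pw (hn : 0 < n) (x y : ZMod (2 * n)) : pw n x * pw n y = pw n (x + y) :=
  (pw_add hn x y).symm

lemma pw_mul_j_inv (hn : 0 < n) (x : ZMod (2 * n)) :
    (pw n x * jU)⁻¹ = pw n (((n : ℕ) : ZMod (2 * n)) + x) * jU := by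
  symm
  rw [eq_inv_iff_mul_eq_one]
  calc pw n (((n : ℕ) : ZMod (2 * n)) + x) * jU * (pw n x * jU)
      = pw n (((n : ℕ) : ZMod (2 * n)) + x) * (jU * pw n x) * jU := by group
    _ = pw n (((n : ℕ) : ZMod (2 * n)) + x) * (pw n (-x) * jU) * jU := by rw [jU_mul_pw hn]
    _ = pw n (((n : ℕ) : ZMod (2 * n)) + x) * pw n (-x) * (jU * jU) := by group
    _ = pw n (((n : ℕ) : ZMod (2 * n)) + x) * pw n (-x) * pw n ((n : ℕ) : ZMod (2 * n)) := by
        rw [jU_sq' hn]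
    _ = pw n (((n : ℕ) : ZMod (2 * n)) + x + -x + ((n : ℕ) : ZMod (2 * n))) := by
        rw [mul_pw_pw hn, mul_pw_pw hn]
    _ = pw n (((n : ℕ) : ZMod (2 * n)) + ((n : ℕ) : ZMod (2 * n))) := by
        congr 1; ring
    _ = 1 := by
        rw [← Nat.cast_add, pw_natCast hn]
        have : n + n = 2 * n := by ring
        rw [this, omega_two_n hn]

lemma mul_pw_pwj (hn : 0 < n) (x y : ZMod (2 * n)) :
    pw n x * (pw n y * jU) = pw n (x + y) * jU := by rw [← mul_assoc, mul_pw_pw hn]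

lemma mul_pwj_pw (hn : 0 < n) (x y : ZMod (2 * n)) :
    (pw n x * jU) * pw n y = pw n (x - y) * jU := by
  rw [mul_assoc, jU_mul_pw hn, ← mul_assoc, mul_pw_pw hn, sub_eq_add_neg]

lemma mul_pwj_pwj (hn : 0 < n) (x y : ZMod (2 * n)) :
    (pw n x * jU) * (pw n y * jU) = pw n (x - y + ((n : ℕ) : ZMod (2 * n))) := by
  rw [← mul_assoc, mul_assoc (pw n x) jU (pw n y), jU_mul_pw hn, ← mul_assoc,
    mul_pw_pw hn, mul_assoc, jU_sq' hn, mul_pw_pw hn, sub_eq_add_neg]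

lemma pw_inv (hn : 0 < n) (x : ZMod (2 * n)) : (pw n x)⁻¹ = pw n (-x) := (pw_neg hn x).symm

/-- The subgroup of `ℍˣ` given by the explicit description of `𝒟ₙ`. -/
noncomputable def dicSet (n : ℕ) (hn : 0 < n) : Subgroup ℍˣ where
  carrier := {g | ∃ x : ZMod (2 * n), g = pw n x ∨ g = pw n x * jU}
  one_mem' := ⟨0, Or.inl (pw_zero hn).symm⟩
  mul_mem' := by
    rintro a b ⟨x, hx | hx⟩ ⟨y, hy | hy⟩ <;> subst hx <;> subst hy
    · exact ⟨x + y, Or.inl (mul_pw_pw hn x y)⟩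
    · exact ⟨x + y, Or.inr (mul_pw_pwj hn x y)⟩
    · exact ⟨x - y, Or.inr (mul_pwj_pw hn x y)⟩
    · exact ⟨x - y + ((n : ℕ) : ZMod (2 * n)), Or.inl (mul_pwj_pwj hn x y)⟩
  inv_mem' := by
    rintro a ⟨x, hx | hx⟩ <;> subst hx
    · exact ⟨-x, Or.inl (pw_inv hn x)⟩
    · exact ⟨((n : ℕ) : ZMod (2 * n)) + x, Or.inr (pw_mul_j_inv hn x)⟩

lemma omega_mem_dicyclic : omegaU n ∈ dicyclic n :=
  Subgroup.subset_closure (by simp [Set.mem_insert_iff])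

lemma jU_mem_dicyclic : jU ∈ dicyclic n :=
  Subgroup.subset_closure (by simp [Set.mem_insert_iff])

lemma pw_mem_dicyclic (x : ZMod (2 * n)) : pw n x ∈ dicyclic n :=
  pow_mem omega_mem_dicyclic _

lemma dicyclic_le_dicSet (hn : 0 < n) : dicyclic n ≤ dicSet n hn := by
  rw [dicyclic, Subgroup.closure_le]
  rintro g (rfl | rfl)
  · refine ⟨(1 : ℕ), Or.inl ?_⟩
    haveI : NeZero (2 * n) := ⟨by omega⟩
    rw [pw_natCast hn, pow_one]
  · exact ⟨0, Or.inr (by rw [pw_zero hn, one_mul])⟩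

/-- rotations and reflections are distinct -/
lemma pw_ne_pwj (x y : ZMod (2 * n)) : pw n x ≠ pw n y * jU := by
  intro h
  have := congrArg (fun u : ℍˣ => (u : ℍ).re) h
  have h2 := congrArg (fun u : ℍˣ => (u : ℍ).imI) h
  rw [pw_rot, pw_rot] at this h2
  have hv := rot_mul_jU_val ((y.val : ℝ) * (Real.pi / n))
  simp only [rot_val] at this h2
  rw [hv] at this h2
  simp at this h2
  nlinarith [Real.sin_sq_add_cos_sq ((x.val : ℝ) * (Real.pi / n))]

end GRP
end Stmt8
namespace Stmt8

section CIRC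
variable {n : ℕ}

lemma circ_pw_pw (hn : 0 < n) (x y : ZMod (2 * n)) :
    circ (pw n x) (pw n y) = pw n (x - y + x) := by
  rw [circ, pw_inv hn, mul_pw_pw hn, mul_pw_pw hn, sub_eq_add_neg]

lemma circ_pwj_pwj (hn : 0 < n) (x y : ZMod (2 * n)) :
    circ (pw n x * jU) (pw n y * jU) = pw n (x - y + x) * jU := by
  rw [circ, pw_mul_j_inv hn, mul_pwj_pwj hn, mul_pw_pwj hn]
  congr 1
  ring

lemma circ_pw_pwj (hn : 0 < n) (x y : ZMod (2 * n)) :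
    circ (pw n x) (pw n y * jU) = pw n (((n : ℕ) : ZMod (2 * n)) + y) * jU := by
  rw [circ, pw_mul_j_inv hn, mul_pw_pwj hn, mul_pwj_pw hn]
  congr 1
  ring

lemma circ_pwj_pw (hn : 0 < n) (x y : ZMod (2 * n)) :
    circ (pw n x * jU) (pw n y) = pw n (y + ((n : ℕ) : ZMod (2 * n))) := by
  rw [circ, pw_inv hn, mul_pwj_pw hn, mul_pwj_pwj hn]
  congr 1
  ring

end CIRC

section ZMODLEM

open AddSubgroup

/-- A subset of `ZMod N` containing `0` and closed under `(a,b) ↦ a - b + a`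
is an additive subgroup. -/
lemma circClosed_eq_closure {N : ℕ} [NeZero N] {S : Set (ZMod N)} (h0 : (0:ZMod N) ∈ S)
    (hcc : ∀ a ∈ S, ∀ b ∈ S, a - b + a ∈ S) :
    S = (AddSubgroup.closure S : Set (ZMod N)) := by
  have hneg : ∀ b ∈ S, -b ∈ S := fun b hb => by simpa using hcc 0 h0 b hb
  have hstep : ∀ c ∈ S, ∀ a ∈ S, ∀ b ∈ S, c + 2*(a-b) ∈ S := by
    intro c hcS a ha b hb
    have h1 : b - c + b ∈ S := hcc b hb c hcS
    have h2 : a - (b - c + b) + a ∈ S := hcc a ha _ h1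
    have : a - (b - c + b) + a = c + 2*(a-b) := by ring
    rwa [this] at h2
  set H := AddSubgroup.closure S with hH
  have hP : ∀ h ∈ H, ∀ c ∈ S, c + 2*h ∈ S := by
    intro h hh
    induction hh using AddSubgroup.closure_induction with
    | mem x hx =>
      intro c hcS
      have := hstep c hcS x hx 0 h0
      simpa using this
    | zero =>
      intro c hcS
      simpa using hcS
    | add x y hx hy ihx ihy =>
      intro c hcS
      have h1 := ihx c hcS
      have h2 := ihy _ h1
      have : c + 2*x + 2*y = c + 2*(x+y) := by ring
      rwa [this] at h2
    | neg x hx ihx =>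
      intro c hcS
      have h1 := ihx (-c) (hneg c hcS)
      have h2 := hneg _ h1
      have : -(-c + 2*x) = c + 2*(-x) := by ring
      rwa [this] at h2
  have h2H : ∀ h ∈ H, 2*h ∈ S := fun h hh => by simpa using hP h hh 0 h0
  obtain ⟨g, hg⟩ := IsAddCyclic.exists_generator (α := H)
  have hgen : ∀ x ∈ H, ∃ k : ℤ, x = k • ((g : ZMod N)) := by
    intro x hx
    obtain ⟨k, hk⟩ := mem_zmultiples_iff.mp (hg ⟨x, hx⟩)
    have h' : k • ((g : ZMod N)) = x := congrArg (Subtype.val) hk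
    exact ⟨k, h'.symm⟩
  apply Set.Subset.antisymm (AddSubgroup.subset_closure)
  intro h hh
  by_cases hcase : ∃ h' ∈ H, h = 2*h'
  · obtain ⟨h', hh', rfl⟩ := hcase
    exact h2H h' hh'
  · -- find s₀ ∈ S not in 2H
    have hs0 : ∃ s₀ ∈ S, ¬ ∃ h' ∈ H, s₀ = 2*h' := by
      by_contra hall
      push_neg at hall
      -- then S ⊆ TwoH, hence H ≤ TwoH, contradicting hcase
      set TwoH : AddSubgroup (ZMod N) := H.map (AddMonoidHom.mulLeft (2 : ZMod N)) with hT
      have hST : S ⊆ TwoH := by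
        intro s hs
        obtain ⟨h', hh', hs'⟩ := hall s hs
        exact ⟨h', hh', by simpa [AddMonoidHom.mulLeft] using hs'.symm⟩
      have hHT : H ≤ TwoH := (AddSubgroup.closure_le _).mpr hST
      obtain ⟨h', hh', hh2⟩ := hHT hh
      exact hcase ⟨h', hh', by simpa [AddMonoidHom.mulLeft] using hh2.symm⟩
    obtain ⟨s₀, hs₀S, hs₀odd⟩ := hs0
    obtain ⟨k, hk⟩ := hgen h hh
    obtain ⟨l, hl⟩ := hgen s₀ (AddSubgroup.subset_closure hs₀S)
    have hgH : (g : ZMod N) ∈ H := g.2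
    rcases Int.even_or_odd k with ⟨t, ht⟩ | ⟨t, ht⟩
    · exfalso
      apply hcase
      refine ⟨t • (g : ZMod N), zsmul_mem hgH t, ?_⟩
      rw [hk, ht]
      rw [show t + t = (2:ℤ) * t by ring, mul_zsmul]
      rw [zsmul_eq_mul]
      push_cast
      ring
    rcases Int.even_or_odd l with ⟨u, hu⟩ | ⟨u, hu⟩
    · exfalso
      apply hs₀odd
      refine ⟨u • (g : ZMod N), zsmul_mem hgH u, ?_⟩
      rw [hl, hu]
      rw [show u + u = (2:ℤ) * u by ring, mul_zsmul, zsmul_eq_mul]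
      push_cast
      ring
    · -- both odd: h = s₀ + 2*((t-u) • g)
      have key : h = s₀ + 2 * ((t - u) • (g : ZMod N)) := by
        rw [hk, hl, ht, hu]
        rw [zsmul_eq_mul, zsmul_eq_mul, zsmul_eq_mul]
        push_cast
        ring
      rw [key]
      exact hP _ (zsmul_mem hgH _) s₀ hs₀S

lemma dvd_val_of_mem_zmultiples {N a : ℕ} [NeZero N] (haN : a ∣ N) {x : ZMod N}
    (hx : x ∈ zmultiples ((a : ℕ) : ZMod N)) : a ∣ x.val := by
  obtain ⟨k, hk⟩ := mem_zmultiples_iff.mp hx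
  have hcast : (((x.val : ℤ) - k * a : ℤ) : ZMod N) = 0 := by
    push_cast
    rw [ZMod.natCast_val, ZMod.cast_id]
    rw [← hk, zsmul_eq_mul]
    push_cast
    ring
  have hNdvd : (N : ℤ) ∣ ((x.val : ℤ) - k * a) := (ZMod.intCast_zmod_eq_zero_iff_dvd _ _).mp hcast
  have haZ : (a : ℤ) ∣ ((x.val : ℤ) - k * a) := dvd_trans (Int.natCast_dvd_natCast.mpr haN) hNdvd
  have : (a : ℤ) ∣ (x.val : ℤ) := by
    have := dvd_add haZ (dvd_mul_left (a:ℤ) k)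
    simpa using this
  exact_mod_cast this

lemma subgroup_eq_zmultiples {N : ℕ} [NeZero N] (H : AddSubgroup (ZMod N)) :
    ∃ a : ℕ, 0 < a ∧ a ∣ N ∧ H = zmultiples ((a : ℕ) : ZMod N) := by
  obtain ⟨g, hg⟩ := IsAddCyclic.exists_generator (α := H)
  set gv := (g : ZMod N) with hgv
  refine ⟨Nat.gcd gv.val N, Nat.gcd_pos_of_pos_right _ (Nat.pos_of_ne_zero (NeZero.ne N)),
    Nat.gcd_dvd_right _ _, ?_⟩
  set a := Nat.gcd gv.val N with ha
  have hmemH : ((a : ℕ) : ZMod N) ∈ H := by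
    have hbez := Nat.gcd_eq_gcd_ab gv.val N
    have h1 : (((gv.val.gcd N : ℤ)) : ZMod N) =
        (((gv.val : ℤ) * gv.val.gcdA N + (N:ℤ) * gv.val.gcdB N : ℤ) : ZMod N) := by
      rw [← hbez]
    push_cast at h1
    rw [ZMod.natCast_self, ZMod.natCast_val, ZMod.cast_id] at h1
    have h2 : ((a : ℕ) : ZMod N) = (gv.val.gcdA N) • gv := by
      rw [zsmul_eq_mul, ha, h1]
      ring
    rw [h2]
    exact zsmul_mem g.2 _
  apply le_antisymm
  · intro x hx
    obtain ⟨k, hk⟩ := mem_zmultiples_iff.mp (hg ⟨x, hx⟩)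
    have hxk : x = k • gv := by
      have h' : k • gv = x := congrArg (Subtype.val) hk
      exact h'.symm
    have hgvmem : gv ∈ zmultiples ((a : ℕ) : ZMod N) := by
      have hdvd : a ∣ gv.val := Nat.gcd_dvd_left _ _
      obtain ⟨m, hm⟩ := hdvd
      rw [mem_zmultiples_iff]
      refine ⟨m, ?_⟩
      rw [zsmul_eq_mul]
      have : gv = ((gv.val : ℕ) : ZMod N) := by rw [ZMod.natCast_val, ZMod.cast_id]
      rw [this, hm]
      push_cast
      ring
    rw [hxk]
    exact zsmul_mem hgvmem k
  · intro x hx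
    obtain ⟨k, hk⟩ := mem_zmultiples_iff.mp hx
    rw [← hk]
    exact zsmul_mem hmemH k

end ZMODLEM
end Stmt8
namespace Stmt8
open AddSubgroup

section LAB
variable {n : ℕ}

lemma powSet_eq (hn : 0 < n) {a : ℕ} (ha1 : 0 < a) (ha : a ∣ 2 * n) :
    {x : ℍˣ | ∃ m, 1 ≤ m ∧ m ≤ 2 * n / a ∧ x = omegaU n ^ (m * a)}
      = pw n '' (zmultiples ((a : ℕ) : ZMod (2 * n)) : Set (ZMod (2*n))) := by
  haveI : NeZero (2 * n) := ⟨by omega⟩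
  ext u
  constructor
  · rintro ⟨m, hm1, hm2, rfl⟩
    refine ⟨((m * a : ℕ) : ZMod (2*n)), ?_, (pw_natCast hn _)⟩
    rw [SetLike.mem_coe, mem_zmultiples_iff]
    exact ⟨(m : ℤ), by rw [zsmul_eq_mul]; push_cast; ring⟩
  · rintro ⟨y, hy, rfl⟩
    rw [SetLike.mem_coe] at hy
    have hdv : a ∣ y.val := dvd_val_of_mem_zmultiples ha hy
    by_cases h0 : y.val = 0
    · refine ⟨2 * n / a, ?_, le_refl _, ?_⟩
      · have : a ≤ 2 * n := Nat.le_of_dvd (by omega) ha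
        exact Nat.one_le_div_iff ha1 |>.mpr this
      · rw [Nat.div_mul_cancel ha, omega_two_n hn]
        unfold pw
        rw [h0, pow_zero]
    · refine ⟨y.val / a, ?_, ?_, ?_⟩
      · exact Nat.one_le_div_iff ha1 |>.mpr (Nat.le_of_dvd (Nat.pos_of_ne_zero h0) hdv)
      · exact Nat.div_le_div_right (le_of_lt (ZMod.val_lt y))
      · rw [Nat.div_mul_cancel hdv]
        rfl

lemma Lab_eq (hn : 0 < n) {a b : ℕ} (ha1 : 0 < a) (hb1 : 0 < b)
    (ha : a ∣ 2 * n) (hb : b ∣ 2 * n) :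
    Lab n a b = pw n '' (zmultiples ((a : ℕ) : ZMod (2 * n)) : Set (ZMod (2*n)))
      ∪ (fun u => u * jU) '' (pw n '' (zmultiples ((b : ℕ) : ZMod (2 * n)) : Set (ZMod (2*n)))) := by
  unfold Lab
  rw [← powSet_eq hn ha1 ha, ← powSet_eq hn hb1 hb]
  congr 1
  ext u
  constructor
  · rintro ⟨l, hl1, hl2, rfl⟩
    exact ⟨omegaU n ^ (l * b), ⟨l, hl1, hl2, rfl⟩, rfl⟩
  · rintro ⟨v, ⟨l, hl1, hl2, rfl⟩, rfl⟩
    exact ⟨l, hl1, hl2, rfl⟩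

-- conjugation lemmas
lemma conj_pw (hn : 0 < n) (θ : ℝ) (x : ZMod (2 * n)) :
    rot θ * pw n x * (rot θ)⁻¹ = pw n x := by
  rw [rot_inv, pw_rot, rot_mul, rot_mul]
  congr 1
  ring

lemma conj_pwj (hn : 0 < n) {θ : ℝ} {δ : ZMod (2 * n)} (hδ : rot (2 * θ) = pw n δ)
    (x : ZMod (2 * n)) :
    rot θ * (pw n x * jU) * (rot θ)⁻¹ = pw n (x + δ) * jU := by
  rw [rot_inv]
  have h1 : (pw n x * jU) * rot (-θ) = pw n x * (rot θ * jU) := by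
    rw [mul_assoc, jU_mul_rot, neg_neg]
  calc rot θ * (pw n x * jU) * rot (-θ)
      = rot θ * ((pw n x * jU) * rot (-θ)) := by group
    _ = rot θ * (pw n x * (rot θ * jU)) := by rw [h1]
    _ = (rot θ * pw n x * rot θ) * jU := by group
    _ = pw n (x + δ) * jU := by
        rw [pw_rot x, rot_mul, rot_mul]
        have h2 : θ + (x.val : ℝ) * (Real.pi / n) + θ
            = (x.val : ℝ) * (Real.pi / n) + 2 * θ := by ring
        rw [h2, ← rot_mul, ← pw_rot, hδ, mul_pw_pw hn]

lemma conj_mem_dicyclic (hn : 0 < n) {θ : ℝ} {δ : ZMod (2 * n)} (hδ : rot (2 * θ) = pw n δ) :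
    ∀ g ∈ dicyclic n, rot θ * g * (rot θ)⁻¹ ∈ dicyclic n := by
  intro g hg
  obtain ⟨x, rfl | rfl⟩ := dicyclic_le_dicSet hn hg
  · rw [conj_pw hn]
    exact pw_mem_dicyclic x
  · rw [conj_pwj hn hδ]
    exact Subgroup.mul_mem _ (pw_mem_dicyclic _) jU_mem_dicyclic

lemma rot_neg_two_mul (hn : 0 < n) {θ : ℝ} {δ : ZMod (2 * n)} (hδ : rot (2 * θ) = pw n δ) :
    rot (2 * (-θ)) = pw n (-δ) := by
  have : (2 : ℝ) * (-θ) = -(2 * θ) := by ring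
  rw [this, ← rot_inv, hδ, pw_inv hn]

lemma conj_map_dicyclic (hn : 0 < n) {θ : ℝ} {δ : ZMod (2 * n)} (hδ : rot (2 * θ) = pw n δ) :
    Subgroup.map (MulAut.conj (rot θ)).toMonoidHom (dicyclic n) = dicyclic n := by
  apply le_antisymm
  · rintro _ ⟨g, hg, rfl⟩
    exact conj_mem_dicyclic hn hδ g hg
  · intro g hg
    refine ⟨rot (-θ) * g * (rot (-θ))⁻¹, conj_mem_dicyclic hn (rot_neg_two_mul hn hδ) g hg, ?_⟩
    show rot θ * (rot (-θ) * g * (rot (-θ))⁻¹) * (rot θ)⁻¹ = g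
    rw [rot_inv, neg_neg, rot_inv]
    have h1 : rot θ * rot (-θ) = 1 := by rw [rot_mul, add_neg_cancel, rot_zero]
    calc rot θ * (rot (-θ) * g * rot θ) * rot (-θ)
        = (rot θ * rot (-θ)) * g * (rot θ * rot (-θ)) := by group
      _ = g := by rw [h1, one_mul, mul_one]

end LAB
end Stmt8
namespace Stmt8
open AddSubgroup

section AUT
variable {n : ℕ}

/-- Conjugation by `rot θ` as an automorphism of `𝒟ₙ`. -/
noncomputable def conjAut (hn : 0 < n) (θ : ℝ) (δ : ZMod (2*n)) (hδ : rot (2*θ) = pw n δ) :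
    (dicyclic n) ≃* (dicyclic n) :=
  (MulEquiv.subgroupMap (MulAut.conj (rot θ)) (dicyclic n)).trans
    (MulEquiv.subgroupCongr (conj_map_dicyclic hn hδ))

lemma conjAut_apply (hn : 0 < n) (θ : ℝ) (δ : ZMod (2*n)) (hδ : rot (2*θ) = pw n δ)
    (g : dicyclic n) :
    ((conjAut hn θ δ hδ g : dicyclic n) : ℍˣ) = rot θ * (g : ℍˣ) * (rot θ)⁻¹ := rfl

lemma sgImage_conjAut (hn : 0 < n) {θ : ℝ} {δ : ZMod (2*n)} (hδ : rot (2*θ) = pw n δ)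
    (S : Set ℍˣ) (hS : S ⊆ (dicyclic n : Set ℍˣ)) :
    sgImage (conjAut hn θ δ hδ) S = (fun z => rot θ * z * (rot θ)⁻¹) '' S := by
  ext y
  constructor
  · rintro ⟨g, hgS, rfl⟩
    exact ⟨(g : ℍˣ), hgS, rfl⟩
  · rintro ⟨z, hz, rfl⟩
    exact ⟨⟨z, hS hz⟩, hz, rfl⟩

/-- The subgroup of `ℍˣ` of elements with `imJ = imK = 0`. -/
def rotSub : Subgroup ℍˣ where
  carrier := {u | ((u : ℍˣ) : ℍ).imJ = 0 ∧ ((u : ℍˣ) : ℍ).imK = 0}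
  one_mem' := by constructor <;> rfl
  mul_mem' := by
    rintro a b ⟨ha1, ha2⟩ ⟨hb1, hb2⟩
    constructor <;> simp [Units.val_mul, Quaternion.imJ_mul, Quaternion.imK_mul, ha1, ha2, hb1, hb2]
  inv_mem' := by
    rintro a ⟨ha1, ha2⟩
    have hv : ((a⁻¹ : ℍˣ) : ℍ) = ((a : ℍˣ) : ℍ)⁻¹ := Units.val_inv_eq_inv_val a
    constructor <;> show _ = (0:ℝ) <;> rw [hv, Quaternion.inv_def] <;>
      simp [ha1, ha2]

/-- Auxiliary subgroup used for the generation argument. -/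
noncomputable def WSub (n : ℕ) (hn : 0 < n) (C : AddSubgroup (ZMod (2*n)))
    (hνC : ((n:ℕ) : ZMod (2*n)) ∈ C) (β : ZMod (2*n)) : Subgroup ℍˣ where
  carrier := {g | ∃ x ∈ C, g = pw n x ∨ g = pw n (x + β) * jU}
  one_mem' := ⟨0, C.zero_mem, Or.inl (pw_zero hn).symm⟩
  mul_mem' := by
    rintro g h ⟨x, hx, rfl | rfl⟩ ⟨y, hy, rfl | rfl⟩
    · exact ⟨x + y, C.add_mem hx hy, Or.inl (mul_pw_pw hn x y)⟩
    · refine ⟨x + y, C.add_mem hx hy, Or.inr ?_⟩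
      rw [mul_pw_pwj hn]
      congr 1
      ring_nf
    · refine ⟨x - y, C.sub_mem hx hy, Or.inr ?_⟩
      rw [mul_pwj_pw hn]
      congr 1
      ring_nf
    · refine ⟨x - y + ((n:ℕ) : ZMod (2*n)), C.add_mem (C.sub_mem hx hy) hνC, Or.inl ?_⟩
      rw [mul_pwj_pwj hn]
      congr 1
      ring_nf
  inv_mem' := by
    rintro g ⟨x, hx, rfl | rfl⟩
    · exact ⟨-x, C.neg_mem hx, Or.inl (pw_inv hn x)⟩
    · refine ⟨((n:ℕ) : ZMod (2*n)) + x, C.add_mem hνC hx, Or.inr ?_⟩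
      rw [pw_mul_j_inv hn]
      congr 1
      ring_nf

end AUT
end Stmt8

open Stmt8 AddSubgroup

theorem statement_8 (n : ℕ) (hn : 2 ≤ n) (L : Set ℍˣ)
    (hL : IsReflectionSystem (dicyclic n) L) :
    ∃ a b : ℕ, OmegaMem n a b ∧
      ∃ (φ : dicyclic n ≃* dicyclic n) (x : ℍˣ), x ∈ L ∧
        (Lab n a b = sgImage φ ((x * ·) '' L) ∨
         Lab n a b = sgImage φ ((· * x) '' L)) := by
  classical
  have hn0 : 0 < n := by omega
  haveI : NeZero (2*n) := ⟨by omega⟩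
  obtain ⟨hgen, hcirc, hone⟩ := hL
  have hLsub : L ⊆ (dicyclic n : Set ℍˣ) := by
    rw [← hgen]; exact Subgroup.subset_closure
  have hdec : ∀ l ∈ L, ∃ x : ZMod (2*n), l = pw n x ∨ l = pw n x * jU :=
    fun l hl => dicyclic_le_dicSet hn0 (hLsub hl)
  set ν : ZMod (2*n) := ((n:ℕ) : ZMod (2*n)) with hν
  have hA0 : pw n 0 ∈ L := by rw [pw_zero hn0]; exact hone
  -- B nonempty
  have hBne : ∃ β : ZMod (2*n), pw n β * jU ∈ L := by
    by_contra hB0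
    push_neg at hB0
    have hLR : L ⊆ (rotSub : Set ℍˣ) := by
      intro l hl
      obtain ⟨x, rfl | rfl⟩ := hdec l hl
      · refine ⟨?_, ?_⟩ <;> rw [pw_rot] <;> rfl
      · exact absurd hl (hB0 x)
    have hjR : jU ∈ rotSub := by
      have hle : dicyclic n ≤ rotSub := by
        rw [← hgen]; exact (Subgroup.closure_le _).mpr hLR
      exact hle jU_mem_dicyclic
    have h10 : (1:ℝ) = 0 := hjR.1
    norm_num at h10
  obtain ⟨β, hβL⟩ := hBne
  have h0A : pw n (0 : ZMod (2*n)) ∈ L := hA0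
  have h0B' : pw n ((0:ZMod (2*n)) + β) * jU ∈ L := by rwa [zero_add]
  have hAc : ∀ x, pw n x ∈ L → ∀ y, pw n y ∈ L → pw n (x - y + x) ∈ L := by
    intro x hx y hy
    have h := hcirc _ hx _ hy
    rwa [circ_pw_pw hn0] at h
  have hB'c : ∀ x, pw n (x + β) * jU ∈ L → ∀ y, pw n (y + β) * jU ∈ L →
      pw n ((x - y + x) + β) * jU ∈ L := by
    intro x hx y hy
    have h := hcirc _ hx _ hy
    rw [circ_pwj_pwj hn0] at h
    have he : (x + β) - (y + β) + (x + β) = (x - y + x) + β := by ring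
    rwa [he] at h
  have hνA : pw n ν ∈ L := by
    have h := hcirc _ hβL _ hA0
    rw [circ_pwj_pw hn0] at h
    rwa [zero_add] at h
  have hνB' : pw n (ν + β) * jU ∈ L := by
    have h := hcirc _ hA0 _ hβL
    rwa [circ_pw_pwj hn0] at h
  -- subgroup structure
  have hAset := circClosed_eq_closure (S := {x : ZMod (2*n) | pw n x ∈ L}) h0A hAc
  have hB'set := circClosed_eq_closure (S := {x : ZMod (2*n) | pw n (x + β) * jU ∈ L})
    h0B' hB'c
  obtain ⟨a, ha0, haN, haeq⟩ :=
    subgroup_eq_zmultiples (AddSubgroup.closure {x : ZMod (2*n) | pw n x ∈ L})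
  obtain ⟨b, hb0, hbN, hbeq⟩ :=
    subgroup_eq_zmultiples (AddSubgroup.closure {x : ZMod (2*n) | pw n (x + β) * jU ∈ L})
  have hAiff : ∀ x : ZMod (2*n), pw n x ∈ L ↔ x ∈ zmultiples ((a:ℕ) : ZMod (2*n)) := by
    intro x
    have h := Set.ext_iff.mp (hAset.trans (by rw [haeq])) x
    exact h
  have hBiff : ∀ x : ZMod (2*n), pw n (x + β) * jU ∈ L ↔
      x ∈ zmultiples ((b:ℕ) : ZMod (2*n)) := by
    intro x
    have h := Set.ext_iff.mp (hB'set.trans (by rw [hbeq])) x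
    exact h
  have hνval : ν.val = n := ZMod.val_cast_of_lt (by omega)
  have han : a ∣ n := by
    have h2 := dvd_val_of_mem_zmultiples haN ((hAiff ν).mp hνA)
    rwa [hνval] at h2
  have hbn : b ∣ n := by
    have h2 := dvd_val_of_mem_zmultiples hbN ((hBiff ν).mp hνB')
    rwa [hνval] at h2
  -- generation: gcd a b = 1
  have hsup : (1 : ZMod (2*n)) ∈
      (zmultiples ((a:ℕ):ZMod (2*n))) ⊔ (zmultiples ((b:ℕ):ZMod (2*n))) := by
    set C := (zmultiples ((a:ℕ):ZMod (2*n))) ⊔ (zmultiples ((b:ℕ):ZMod (2*n))) with hC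
    have hνC : ν ∈ C := AddSubgroup.mem_sup_left ((hAiff ν).mp hνA)
    have hLW : L ⊆ (WSub n hn0 C hνC β : Set ℍˣ) := by
      intro l hl
      obtain ⟨x, rfl | rfl⟩ := hdec l hl
      · exact ⟨x, AddSubgroup.mem_sup_left ((hAiff x).mp hl), Or.inl rfl⟩
      · refine ⟨x - β, AddSubgroup.mem_sup_right ((hBiff (x - β)).mp (by rwa [sub_add_cancel])),
          Or.inr ?_⟩
        rw [sub_add_cancel]
    have hω : omegaU n ∈ WSub n hn0 C hνC β := by
      have hle : dicyclic n ≤ WSub n hn0 C hνC β := by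
        rw [← hgen]; exact (Subgroup.closure_le _).mpr hLW
      exact hle omega_mem_dicyclic
    obtain ⟨x, hxC, hx⟩ := hω
    have hω1 : omegaU n = pw n 1 := by
      rw [show (1 : ZMod (2*n)) = ((1:ℕ) : ZMod (2*n)) by norm_num, pw_natCast hn0, pow_one]
    rcases hx with hx | hx
    · have he : (1 : ZMod (2*n)) = x := pw_inj hn0 (by rw [← hω1, ← hx])
      rwa [he]
    · exact absurd (hω1 ▸ hx) (pw_ne_pwj 1 (x+β))
  have hgcd : Nat.gcd a b = 1 := by
    rw [AddSubgroup.mem_sup] at hsup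
    obtain ⟨y, hy, z, hz, hyz⟩ := hsup
    obtain ⟨k, hk⟩ := mem_zmultiples_iff.mp hy
    obtain ⟨l, hl⟩ := mem_zmultiples_iff.mp hz
    have hcast : ((k * a + l * b - 1 : ℤ) : ZMod (2*n)) = 0 := by
      rw [← hk, ← hl, zsmul_eq_mul, zsmul_eq_mul] at hyz
      push_cast
      rw [sub_eq_zero]
      exact_mod_cast hyz
    have h2n : ((2*n : ℕ) : ℤ) ∣ (k*a + l*b - 1) :=
      (ZMod.intCast_zmod_eq_zero_iff_dvd _ _).mp (by exact_mod_cast hcast)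
    have hda : ((Nat.gcd a b : ℕ):ℤ) ∣ (a:ℤ) := Int.natCast_dvd_natCast.mpr (Nat.gcd_dvd_left a b)
    have hdb : ((Nat.gcd a b : ℕ):ℤ) ∣ (b:ℤ) := Int.natCast_dvd_natCast.mpr (Nat.gcd_dvd_right a b)
    have hdn : ((Nat.gcd a b : ℕ):ℤ) ∣ ((2*n:ℕ):ℤ) := Int.natCast_dvd_natCast.mpr
      (Dvd.dvd.mul_left (dvd_trans (Nat.gcd_dvd_left a b) han) 2)
    have hd1 : ((Nat.gcd a b : ℕ):ℤ) ∣ 1 := by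
      have h3 : ((Nat.gcd a b : ℕ):ℤ) ∣ (k*a + l*b - (k*a + l*b - 1)) :=
        dvd_sub (dvd_add (Dvd.dvd.mul_left hda k) (Dvd.dvd.mul_left hdb l))
          (dvd_trans hdn h2n)
      simpa using h3
    exact Nat.dvd_one.mp (by exact_mod_cast hd1)
  -- the conjugating rotation
  set θ : ℝ := -((β.val : ℝ) * (Real.pi / n)) / 2 with hθ
  have hδ : rot (2 * θ) = pw n (-β) := by
    have h2 : 2 * θ = -((β.val : ℝ) * (Real.pi / n)) := by rw [hθ]; ring
    rw [h2, ← rot_inv, ← pw_rot β, pw_inv hn0]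
  have ha2n : a ∣ 2*n := Dvd.dvd.mul_left han 2
  have hb2n : b ∣ 2*n := Dvd.dvd.mul_left hbn 2
  rcases le_or_gt a b with hab | hba
  · -- x = 1, Lab n a b
    refine ⟨a, b, ⟨ha0, hab, Nat.le_of_dvd hn0 hbn, han, hbn, hgcd⟩,
      conjAut hn0 θ (-β) hδ, 1, hone, Or.inl ?_⟩
    have himg : ((1:ℍˣ) * ·) '' L = L := by simp
    rw [himg, sgImage_conjAut hn0 hδ L hLsub, Lab_eq hn0 ha0 hb0 ha2n hb2n]
    ext u
    constructor
    · rintro (⟨y, hy, rfl⟩ | ⟨v, ⟨y, hy, rfl⟩, rfl⟩)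
      · exact ⟨pw n y, (hAiff y).mpr hy, conj_pw hn0 θ y⟩
      · refine ⟨pw n (y + β) * jU, (hBiff y).mpr hy, ?_⟩
        show rot θ * (pw n (y + β) * jU) * (rot θ)⁻¹ = pw n y * jU
        rw [conj_pwj hn0 hδ, add_neg_cancel_right]
    · rintro ⟨l, hl, rfl⟩
      obtain ⟨x, rfl | rfl⟩ := hdec l hl
      · show rot θ * pw n x * (rot θ)⁻¹ ∈ _
        rw [conj_pw hn0]
        exact Set.mem_union_left _ ⟨x, (hAiff x).mp hl, rfl⟩
      · show rot θ * (pw n x * jU) * (rot θ)⁻¹ ∈ _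
        rw [conj_pwj hn0 hδ]
        refine Set.mem_union_right _ ⟨pw n (x + -β), ⟨x + -β, ?_, rfl⟩, rfl⟩
        exact (hBiff (x + -β)).mp (by rwa [neg_add_cancel_right])
  · -- x = pw β * jU, Lab n b a
    have hxd : pw n β * jU ∈ dicyclic n :=
      Subgroup.mul_mem _ (pw_mem_dicyclic β) jU_mem_dicyclic
    have hsubx : ((· * (pw n β * jU)) '' L) ⊆ (dicyclic n : Set ℍˣ) := by
      rintro _ ⟨l, hl, rfl⟩
      exact Subgroup.mul_mem _ (hLsub hl) hxd
    refine ⟨b, a, ⟨hb0, le_of_lt hba, Nat.le_of_dvd hn0 han, hbn, han, by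
        rw [Nat.gcd_comm]; exact hgcd⟩,
      conjAut hn0 θ (-β) hδ, pw n β * jU, hβL, Or.inr ?_⟩
    rw [sgImage_conjAut hn0 hδ _ hsubx, Lab_eq hn0 hb0 ha0 hb2n ha2n]
    ext u
    constructor
    · rintro (⟨y, hy, rfl⟩ | ⟨v, ⟨y, hy, rfl⟩, rfl⟩)
      · have hyν : y - ν ∈ zmultiples ((b:ℕ) : ZMod (2*n)) :=
          AddSubgroup.sub_mem _ hy ((hBiff ν).mp hνB')
        refine ⟨(pw n ((y - ν) + β) * jU) * (pw n β * jU),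
          ⟨_, (hBiff (y - ν)).mpr hyν, rfl⟩, ?_⟩
        show rot θ * ((pw n ((y - ν) + β) * jU) * (pw n β * jU)) * (rot θ)⁻¹ = pw n y
        rw [mul_pwj_pwj hn0, show ((y - ν) + β) - β + ν = y by ring, conj_pw hn0]
      · refine ⟨pw n y * (pw n β * jU), ⟨_, (hAiff y).mpr hy, rfl⟩, ?_⟩
        show rot θ * (pw n y * (pw n β * jU)) * (rot θ)⁻¹ = pw n y * jU
        rw [mul_pw_pwj hn0, conj_pwj hn0 hδ, add_neg_cancel_right]
    · rintro ⟨z, ⟨l, hl, rfl⟩, rfl⟩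
      obtain ⟨x, rfl | rfl⟩ := hdec l hl
      · show rot θ * (pw n x * (pw n β * jU)) * (rot θ)⁻¹ ∈ _
        rw [mul_pw_pwj hn0, conj_pwj hn0 hδ, add_neg_cancel_right]
        exact Set.mem_union_right _ ⟨pw n x, ⟨x, (hAiff x).mp hl, rfl⟩, rfl⟩
      · show rot θ * ((pw n x * jU) * (pw n β * jU)) * (rot θ)⁻¹ ∈ _
        rw [mul_pwj_pwj hn0, conj_pw hn0]
        refine Set.mem_union_left _ ⟨x - β + ν, ?_, rfl⟩
        exact AddSubgroup.add_mem _
          ((hBiff (x - β)).mp (by rwa [sub_add_cancel])) ((hBiff ν).mp hνB')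

end
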